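/- There exists an absolute constant C > 0 such that for every δ with 1 < δ ≤ 2 and every R > 0, Σ_{j ∈ ℤ} ∫₀^{R} ( min(δ^{-j}/t, t/δ^{-j}) )² · max(δ^{-j}, t) · dt/t ≤ C · R / (δ − 1). -/

import Mathlib

set_option maxHeartbeats 1000000

open MeasureTheory Set

private lemma lio_eq {R : ℝ} {f : ℝ → ℝ} (hf : IntegrableOn f (Ioo 0 R))
    (hnn : ∀ t ∈ Ioo (0:ℝ) R, 0 ≤ f t) :
    ∫⁻ t in Ioo (0:ℝ) R, ENNReal.ofReal (f t) = ENNReal.ofReal (∫ t in Ioo (0:ℝ) R, f t) :=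
  (ofReal_integral_eq_lintegral_ofReal hf
    (ae_restrict_of_forall_mem measurableSet_Ioo hnn)).symm

private lemma ptwise {a t : ℝ} (ha : 0 < a) (ht : 0 < t) :
    (min (a / t) (t / a)) ^ 2 * max a t / t ≤
      min (t / a) (a ^ ((1:ℝ)/2) * t ^ (-((1:ℝ)/2))) := by
  have hrw : a ^ ((1:ℝ)/2) * t ^ (-((1:ℝ)/2)) = (a / t) ^ ((1:ℝ)/2) := by
    rw [Real.div_rpow ha.le ht.le, Real.rpow_neg ht.le]; ring
  rcases le_total t a with h | h
  · have hmin : min (a / t) (t / a) = t / a :=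
      min_eq_right (by rw [div_le_div_iff₀ ha ht]; nlinarith)
    have hmax : max a t = a := max_eq_left h
    rw [hmin, hmax]
    have heq : (t / a) ^ 2 * a / t = t / a := by field_simp
    rw [heq]
    refine le_min le_rfl ?_
    rw [hrw]
    have h1 : t / a ≤ 1 := div_le_one_of_le₀ h ha.le
    have h2 : (1:ℝ) ≤ (a / t) ^ ((1:ℝ)/2) := by
      have := Real.rpow_le_rpow zero_le_one ((one_le_div ht).mpr h) (by norm_num : (0:ℝ) ≤ 1/2)
      rwa [Real.one_rpow] at this
    linarith
  · have hmin : min (a / t) (t / a) = a / t :=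
      min_eq_left (by rw [div_le_div_iff₀ ht ha]; nlinarith)
    have hmax : max a t = t := max_eq_right h
    rw [hmin, hmax]
    have heq : (a / t) ^ 2 * t / t = (a / t) ^ 2 := by field_simp
    rw [heq]
    have hx0 : 0 < a / t := div_pos ha ht
    have hx1 : a / t ≤ 1 := div_le_one_of_le₀ h ht.le
    refine le_min ?_ ?_
    · have h3 : (a / t) ^ 2 ≤ 1 := pow_le_one₀ hx0.le hx1
      have h2 : (1:ℝ) ≤ t / a := (one_le_div ha).mpr h
      linarith
    · rw [hrw]
      calc (a / t) ^ 2 = (a / t) ^ ((2:ℕ):ℝ) := by rw [Real.rpow_natCast]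
        _ ≤ (a / t) ^ ((1:ℝ)/2) :=
          Real.rpow_le_rpow_of_exponent_ge hx0 hx1 (by norm_num)

private lemma term_bound {δ R : ℝ} (hδ : 1 < δ) (hR : 0 < R) (j : ℤ) :
    (∫⁻ t in Ioo (0:ℝ) R, ENNReal.ofReal
        ((min (δ ^ (-j) / t) (t / δ ^ (-j))) ^ 2 * max (δ ^ (-j)) t / t))
      ≤ ENNReal.ofReal (min (δ ^ j * (R ^ 2 / 2))
          ((δ ^ (-j)) ^ ((1:ℝ)/2) * (2 * R ^ ((1:ℝ)/2)))) := by
  have hδ0 : (0:ℝ) < δ := lt_trans one_pos hδ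
  set a : ℝ := δ ^ (-j) with ha_def
  have ha : 0 < a := zpow_pos hδ0 _
  have hinv : a⁻¹ = δ ^ j := by rw [ha_def, zpow_neg, inv_inv]
  rcases min_cases (δ ^ j * (R ^ 2 / 2)) ((δ ^ (-j)) ^ ((1:ℝ)/2) * (2 * R ^ ((1:ℝ)/2)))
    with ⟨hmin, _⟩ | ⟨hmin, _⟩ <;> rw [hmin]
  · calc (∫⁻ t in Ioo (0:ℝ) R, ENNReal.ofReal
            ((min (a / t) (t / a)) ^ 2 * max a t / t))
        ≤ ∫⁻ t in Ioo (0:ℝ) R, ENNReal.ofReal (a⁻¹ * t) := by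
          apply lintegral_mono_ae
          refine ae_restrict_of_forall_mem measurableSet_Ioo fun t htm => ?_
          exact ENNReal.ofReal_le_ofReal
            (((ptwise ha htm.1).trans (min_le_left _ _)).trans_eq (by rw [div_eq_inv_mul]))
      _ = ENNReal.ofReal (∫ t in Ioo (0:ℝ) R, a⁻¹ * t) := by
          apply lio_eq
          · exact ((continuous_const.mul continuous_id).intervalIntegrable 0 R).1.mono_set
              Ioo_subset_Ioc_self
          · exact fun t htm => mul_nonneg (inv_nonneg.mpr ha.le) htm.1.le
      _ ≤ ENNReal.ofReal (δ ^ j * (R ^ 2 / 2)) := by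
          apply ENNReal.ofReal_le_ofReal
          rw [← integral_Ioc_eq_integral_Ioo, ← intervalIntegral.integral_of_le hR.le,
            intervalIntegral.integral_const_mul, integral_id, hinv]
          apply le_of_eq; ring
  · calc (∫⁻ t in Ioo (0:ℝ) R, ENNReal.ofReal
            ((min (a / t) (t / a)) ^ 2 * max a t / t))
        ≤ ∫⁻ t in Ioo (0:ℝ) R, ENNReal.ofReal (a ^ ((1:ℝ)/2) * t ^ (-((1:ℝ)/2))) := by
          apply lintegral_mono_ae
          refine ae_restrict_of_forall_mem measurableSet_Ioo fun t htm => ?_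
          exact ENNReal.ofReal_le_ofReal ((ptwise ha htm.1).trans (min_le_right _ _))
      _ = ENNReal.ofReal (∫ t in Ioo (0:ℝ) R, a ^ ((1:ℝ)/2) * t ^ (-((1:ℝ)/2))) := by
          apply lio_eq
          · exact ((intervalIntegral.intervalIntegrable_rpow'
              (by norm_num)).1.mono_set Ioo_subset_Ioc_self).const_mul _
          · exact fun t htm => mul_nonneg (Real.rpow_nonneg ha.le _)
              (Real.rpow_nonneg htm.1.le _)
      _ ≤ ENNReal.ofReal ((δ ^ (-j)) ^ ((1:ℝ)/2) * (2 * R ^ ((1:ℝ)/2))) := by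
          apply ENNReal.ofReal_le_ofReal
          rw [← integral_Ioc_eq_integral_Ioo, ← intervalIntegral.integral_of_le hR.le,
            intervalIntegral.integral_const_mul,
            integral_rpow (Or.inl (by norm_num)),
            Real.zero_rpow (by norm_num)]
          apply le_of_eq
          rw [show (-((1:ℝ)/2) + 1) = (1:ℝ)/2 by norm_num]
          ring

theorem stmt_10 :
    ∃ C > (0:ℝ), ∀ δ : ℝ, 1 < δ → δ ≤ 2 → ∀ R > (0:ℝ),
      ∑' j : ℤ, ∫⁻ t in Ioo (0:ℝ) R,
          ENNReal.ofReal
            ((min (δ ^ (-j) / t) (t / δ ^ (-j))) ^ 2 * max (δ ^ (-j)) t / t)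
        ≤ ENNReal.ofReal (C * R / (δ - 1)) := by
  refine ⟨25, by norm_num, ?_⟩
  intro δ hδ hδ2 R hR
  have hδ0 : (0:ℝ) < δ := lt_trans one_pos hδ
  set s : ℝ := δ ^ ((1:ℝ)/2) with hs_def
  have hs1 : 1 < s := by
    rw [hs_def]
    exact (Real.one_lt_rpow_iff_of_pos hδ0).mpr (Or.inl ⟨hδ, by norm_num⟩)
  have hs0 : 0 < s := lt_trans one_pos hs1
  have hs2 : s ≤ 2 := by
    rw [hs_def]
    calc δ ^ ((1:ℝ)/2) ≤ 2 ^ ((1:ℝ)/2) := Real.rpow_le_rpow hδ0.le hδ2 (by norm_num)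
      _ ≤ 2 ^ (1:ℝ) := Real.rpow_le_rpow_of_exponent_le one_le_two (by norm_num)
      _ = 2 := Real.rpow_one 2
  have hsq : s ^ 2 = δ := by
    rw [hs_def, ← Real.rpow_natCast (δ ^ ((1:ℝ)/2)) 2, ← Real.rpow_mul hδ0.le]
    norm_num
  have key : ∀ m : ℤ, ((δ:ℝ) ^ m) ^ ((1:ℝ)/2) = s ^ m := by
    intro m
    rw [hs_def, ← Real.rpow_intCast δ m, ← Real.rpow_mul hδ0.le, mul_comm,
      Real.rpow_mul hδ0.le, Real.rpow_intCast]
  set j0 : ℤ := -⌈Real.logb δ R⌉ with hj0_def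
  have hK1 : (δ:ℝ) ^ j0 ≤ R⁻¹ := by
    rw [← Real.rpow_intCast δ j0]
    have h1 : (j0:ℝ) ≤ -Real.logb δ R := by
      rw [hj0_def]; push_cast; linarith [Int.le_ceil (Real.logb δ R)]
    calc δ ^ (j0:ℝ) ≤ δ ^ (-Real.logb δ R) :=
        Real.rpow_le_rpow_of_exponent_le hδ.le h1
      _ = R⁻¹ := by rw [Real.rpow_neg hδ0.le, Real.rpow_logb hδ0 (ne_of_gt hδ) hR]
  have hK2 : (δ:ℝ) ^ (-j0) ≤ δ * R := by
    rw [← Real.rpow_intCast δ (-j0)]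
    have h1 : ((-j0 : ℤ):ℝ) ≤ Real.logb δ R + 1 := by
      rw [hj0_def]; push_cast; linarith [(Int.ceil_lt_add_one (Real.logb δ R)).le]
    calc δ ^ ((-j0:ℤ):ℝ) ≤ δ ^ (Real.logb δ R + 1) :=
        Real.rpow_le_rpow_of_exponent_le hδ.le h1
      _ = R * δ := by
        rw [Real.rpow_add hδ0, Real.rpow_logb hδ0 (ne_of_gt hδ) hR, Real.rpow_one]
      _ = δ * R := mul_comm _ _
  set g : ℤ → ℝ := fun j => min (δ ^ j * (R ^ 2 / 2))
      ((δ ^ (-j)) ^ ((1:ℝ)/2) * (2 * R ^ ((1:ℝ)/2))) with hg_def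
  have hg0 : ∀ j, 0 ≤ g j := fun j =>
    le_min (by positivity)
      (mul_nonneg (Real.rpow_nonneg (zpow_pos hδ0 _).le _) (by positivity))
  have hRhalf : ((R:ℝ) ^ ((1:ℝ)/2)) ^ 2 = R := by
    rw [← Real.rpow_natCast (R ^ ((1:ℝ)/2)) 2, ← Real.rpow_mul hR.le]
    norm_num
  have hinv_s : s⁻¹ < 1 := by rw [inv_eq_one_div, div_lt_one hs0]; exact hs1
  have hinv_d : δ⁻¹ < 1 := by rw [inv_eq_one_div, div_lt_one hδ0]; exact hδ
  have hδinv1 : δ⁻¹ ≤ 1 := hinv_d.le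
  -- Bound for nonnegative indices (shifted by j0)
  have hP : ∀ n : ℕ, g ((n:ℤ) + j0) ≤ 4 * R * (s⁻¹) ^ n := by
    intro n
    have h1 : g ((n:ℤ) + j0) ≤ s ^ (-((n:ℤ) + j0)) * (2 * R ^ ((1:ℝ)/2)) := by
      rw [hg_def]; exact (min_le_right _ _).trans_eq (by rw [key])
    have h2 : s ^ (-((n:ℤ) + j0)) = s ^ (-j0) * (s⁻¹) ^ n := by
      rw [neg_add, zpow_add₀ (ne_of_gt hs0), mul_comm]
      congr 1
      rw [zpow_neg, zpow_natCast, ← inv_pow]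
    have h3 : s ^ (-j0) ≤ 2 * R ^ ((1:ℝ)/2) := by
      rw [← key (-j0)]
      calc ((δ:ℝ) ^ (-j0)) ^ ((1:ℝ)/2) ≤ (2 * R) ^ ((1:ℝ)/2) := by
            apply Real.rpow_le_rpow (zpow_pos hδ0 _).le _ (by norm_num)
            calc (δ:ℝ) ^ (-j0) ≤ δ * R := hK2
              _ ≤ 2 * R := by nlinarith
        _ = 2 ^ ((1:ℝ)/2) * R ^ ((1:ℝ)/2) := Real.mul_rpow (by norm_num) hR.le
        _ ≤ 2 * R ^ ((1:ℝ)/2) := by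
            have h4 : (2:ℝ) ^ ((1:ℝ)/2) ≤ 2 := by
              calc (2:ℝ) ^ ((1:ℝ)/2) ≤ 2 ^ (1:ℝ) :=
                  Real.rpow_le_rpow_of_exponent_le one_le_two (by norm_num)
                _ = 2 := Real.rpow_one 2
            have h5 : (0:ℝ) ≤ R ^ ((1:ℝ)/2) := Real.rpow_nonneg hR.le _
            nlinarith
    have hinv_nonneg : (0:ℝ) ≤ (s⁻¹) ^ n := by positivity
    calc g ((n:ℤ) + j0) ≤ s ^ (-((n:ℤ) + j0)) * (2 * R ^ ((1:ℝ)/2)) := h1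
      _ = (s ^ (-j0) * (2 * R ^ ((1:ℝ)/2))) * (s⁻¹) ^ n := by rw [h2]; ring
      _ ≤ ((2 * R ^ ((1:ℝ)/2)) * (2 * R ^ ((1:ℝ)/2))) * (s⁻¹) ^ n := by
          apply mul_le_mul_of_nonneg_right _ hinv_nonneg
          exact mul_le_mul_of_nonneg_right h3 (by positivity)
      _ = 4 * R * (s⁻¹) ^ n := by
          have : (2 * R ^ ((1:ℝ)/2)) * (2 * R ^ ((1:ℝ)/2)) = 4 * R := by
            nlinarith [hRhalf]
          rw [this]
  -- Bound for negative indices (shifted by j0)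
  have hN : ∀ n : ℕ, g (-((n:ℤ) + 1) + j0) ≤ R / 2 * (δ⁻¹) ^ n := by
    intro n
    have h1 : g (-((n:ℤ) + 1) + j0) ≤ δ ^ (-((n:ℤ) + 1) + j0) * (R ^ 2 / 2) := by
      rw [hg_def]; exact min_le_left _ _
    have e1 : (δ:ℝ) ^ (-((n:ℤ) + 1)) = (δ⁻¹) ^ (n + 1) := by
      rw [zpow_neg, show ((n:ℤ) + 1) = ((n + 1 : ℕ) : ℤ) by push_cast; ring,
        zpow_natCast, ← inv_pow]
    have e2 : (δ⁻¹:ℝ) ^ (n + 1) ≤ (δ⁻¹) ^ n := by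
      rw [pow_succ]
      exact mul_le_of_le_one_right (pow_nonneg (inv_nonneg.mpr hδ0.le) n) hδinv1
    have h2 : (δ:ℝ) ^ (-((n:ℤ) + 1) + j0) ≤ (δ⁻¹) ^ n * R⁻¹ := by
      rw [zpow_add₀ (ne_of_gt hδ0)]
      exact mul_le_mul (e1 ▸ e2) hK1 (zpow_pos hδ0 _).le
        (pow_nonneg (inv_nonneg.mpr hδ0.le) n)
    calc g (-((n:ℤ) + 1) + j0) ≤ δ ^ (-((n:ℤ) + 1) + j0) * (R ^ 2 / 2) := h1
      _ ≤ ((δ⁻¹) ^ n * R⁻¹) * (R ^ 2 / 2) := mul_le_mul_of_nonneg_right h2 (by positivity)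
      _ = R / 2 * (δ⁻¹) ^ n := by field_simp
  have sumGeomS : Summable (fun n : ℕ => 4 * R * (s⁻¹) ^ n) :=
    (summable_geometric_of_lt_one (by positivity) hinv_s).mul_left _
  have sumGeomD : Summable (fun n : ℕ => R / 2 * (δ⁻¹) ^ n) :=
    (summable_geometric_of_lt_one (by positivity) hinv_d).mul_left _
  have sum1 : Summable (fun n : ℕ => g ((n:ℤ) + j0)) :=
    Summable.of_nonneg_of_le (fun n => hg0 _) hP sumGeomS
  have sum2 : Summable (fun n : ℕ => g (-((n:ℤ) + 1) + j0)) :=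
    Summable.of_nonneg_of_le (fun n => hg0 _) hN sumGeomD
  have sumh : Summable (fun j : ℤ => g (j + j0)) :=
    Summable.of_nat_of_neg_add_one sum1 sum2
  have sumg : Summable g := by
    have := (Equiv.addRight j0).summable_iff (f := g)
    exact this.mp sumh
  have tsum_shift : ∑' j : ℤ, g (j + j0) = ∑' j : ℤ, g j := by
    simpa using (Equiv.addRight j0).tsum_eq g
  have tsum_h : ∑' j : ℤ, g (j + j0)
      = (∑' n : ℕ, g ((n:ℤ) + j0)) + ∑' n : ℕ, g (-((n:ℤ) + 1) + j0) :=
    tsum_of_nat_of_neg_add_one sum1 sum2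
  have hs1' : (0:ℝ) < s - 1 := sub_pos.mpr hs1
  have hδ1 : (0:ℝ) < δ - 1 := sub_pos.mpr hδ
  have t1 : ∑' n : ℕ, g ((n:ℤ) + j0) ≤ 24 * R / (δ - 1) := by
    calc ∑' n : ℕ, g ((n:ℤ) + j0) ≤ ∑' n : ℕ, 4 * R * (s⁻¹) ^ n :=
        Summable.tsum_le_tsum hP sum1 sumGeomS
      _ = 4 * R * (1 - s⁻¹)⁻¹ := by
          rw [tsum_mul_left, tsum_geometric_of_lt_one (by positivity) hinv_s]
      _ ≤ 24 * R / (δ - 1) := by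
          have hinv_eq : (1 - s⁻¹)⁻¹ = s / (s - 1) := by
            rw [show (1:ℝ) - s⁻¹ = (s - 1) / s by field_simp, inv_div]
          rw [hinv_eq, ← hsq]
          rw [show 4 * R * (s / (s - 1)) = 4 * R * s / (s - 1) by ring]
          have hs21 : (0:ℝ) < s ^ 2 - 1 := by nlinarith
          rw [div_le_div_iff₀ hs1' hs21]
          nlinarith [mul_nonneg (mul_nonneg hR.le hs1'.le) (sub_nonneg.mpr hs2),
            mul_nonneg hR.le hs1'.le]
  have t2 : ∑' n : ℕ, g (-((n:ℤ) + 1) + j0) ≤ R / (δ - 1) := by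
    calc ∑' n : ℕ, g (-((n:ℤ) + 1) + j0) ≤ ∑' n : ℕ, R / 2 * (δ⁻¹) ^ n :=
        Summable.tsum_le_tsum hN sum2 sumGeomD
      _ = R / 2 * (1 - δ⁻¹)⁻¹ := by
          rw [tsum_mul_left, tsum_geometric_of_lt_one (by positivity) hinv_d]
      _ ≤ R / (δ - 1) := by
          have hinv_eq : (1 - δ⁻¹)⁻¹ = δ / (δ - 1) := by
            rw [show (1:ℝ) - δ⁻¹ = (δ - 1) / δ by field_simp, inv_div]
          rw [hinv_eq, show R / 2 * (δ / (δ - 1)) = R * δ / 2 / (δ - 1) by ring]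
          rw [div_le_div_iff₀ hδ1 hδ1]
          nlinarith [mul_nonneg (mul_nonneg hR.le hδ1.le) (sub_nonneg.mpr hδ2)]
  have hsumg_le : ∑' j : ℤ, g j ≤ 25 * R / (δ - 1) := by
    rw [← tsum_shift, tsum_h]
    have : 24 * R / (δ - 1) + R / (δ - 1) = 25 * R / (δ - 1) := by ring
    linarith
  calc ∑' j : ℤ, ∫⁻ t in Ioo (0:ℝ) R,
          ENNReal.ofReal
            ((min (δ ^ (-j) / t) (t / δ ^ (-j))) ^ 2 * max (δ ^ (-j)) t / t)
      ≤ ∑' j : ℤ, ENNReal.ofReal (g j) :=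
        ENNReal.tsum_le_tsum (fun j => term_bound hδ hR j)
    _ = ENNReal.ofReal (∑' j : ℤ, g j) := (ENNReal.ofReal_tsum_of_nonneg hg0 sumg).symm
    _ ≤ ENNReal.ofReal (25 * R / (δ - 1)) := ENNReal.ofReal_le_ofReal hsumg_le
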